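/- Let (A,B) be an n×n bimatrix game all of whose payoff entries are strictly positive, and let G' be the 2n×2n symmetrized bimatrix game whose row-player payoff matrix is R = [[0, A],[Bᵀ, 0]] and whose column-player payoff matrix is C = Rᵀ (in block form). Then in every Nash equilibrium (X, Y) of G', writing p = Σ_{i=1}^n X_i and q = Σ_{i=1}^n Y_i, it is not the case that p = 1 and q = 1, and it is not the case that p = 0 and q = 0; consequently either (p > 0 and q < 1) or (p < 1 and q > 0). -/

import Mathlib

open Matrix

/-- A probability vector over a finite index set. -/
def IsProbVec {ι : Type*} [Fintype ι] (x : ι → ℝ) : Prop :=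
  (∀ i, 0 ≤ x i) ∧ ∑ i, x i = 1

/-- Nash equilibrium of the bimatrix game `(A, B)`: `x, y` are probability vectors,
`x` maximises `x'ᵀ A y` and `y` maximises `xᵀ B y'`. -/
def IsNashEq {ι κ : Type*} [Fintype ι] [Fintype κ]
    (A B : Matrix ι κ ℝ) (x : ι → ℝ) (y : κ → ℝ) : Prop :=
  IsProbVec x ∧ IsProbVec y ∧
    (∀ x' : ι → ℝ, IsProbVec x' →
      dotProduct x' (A.mulVec y) ≤ dotProduct x (A.mulVec y)) ∧
    (∀ y' : κ → ℝ, IsProbVec y' →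
      dotProduct x (B.mulVec y') ≤ dotProduct x (B.mulVec y))

/-- In every Nash equilibrium `(X, Y)` of the symmetrized game `G' = (R, Rᵀ)`,
`R = [[0, A], [Bᵀ, 0]]`, built from a bimatrix game `(A, B)` with strictly positive
payoffs, writing `p` and `q` for the total probabilities the two players put on their
first `n` strategies: it is not the case that `p = 1 = q`, it is not the case that
`p = 0 = q`, and consequently either (`p > 0` and `q < 1`) or (`p < 1` and `q > 0`). -/
theorem symmetrization_equilibrium_not_degenerate (n : ℕ)
    (A B : Matrix (Fin n) (Fin n) ℝ)
    (hA : ∀ i j, 0 < A i j) (hB : ∀ i j, 0 < B i j)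
    (X Y : Fin n ⊕ Fin n → ℝ)
    (hXY : IsNashEq (Matrix.fromBlocks 0 A Bᵀ 0) (Matrix.fromBlocks 0 A Bᵀ 0)ᵀ X Y)
    (p q : ℝ)
    (hp : p = ∑ i : Fin n, X (Sum.inl i))
    (hq : q = ∑ i : Fin n, Y (Sum.inl i)) :
    ¬(p = 1 ∧ q = 1) ∧ ¬(p = 0 ∧ q = 0) ∧
      ((0 < p ∧ q < 1) ∨ (p < 1 ∧ 0 < q)) := by
  obtain ⟨⟨hX0, hX1⟩, ⟨hY0, hY1⟩, hmaxX, hmaxY⟩ := hXY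
  have hn : 0 < n := by
    rcases Nat.eq_zero_or_pos n with h | h
    · subst h
      rw [Fintype.sum_sum_type] at hX1
      simp at hX1
    · exact h
  rw [Fintype.sum_sum_type] at hX1 hY1
  rw [← hp] at hX1
  rw [← hq] at hY1
  have hXr0 : 0 ≤ ∑ i : Fin n, X (Sum.inr i) :=
    Finset.sum_nonneg fun i _ => hX0 _
  have hYr0 : 0 ≤ ∑ i : Fin n, Y (Sum.inr i) :=
    Finset.sum_nonneg fun i _ => hY0 _
  have hp0 : 0 ≤ p := hp ▸ Finset.sum_nonneg fun i _ => hX0 _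
  have hq0 : 0 ≤ q := hq ▸ Finset.sum_nonneg fun i _ => hY0 _
  have hp1 : p ≤ 1 := by linarith
  have hq1 : q ≤ 1 := by linarith
  set R := Matrix.fromBlocks (0 : Matrix (Fin n) (Fin n) ℝ) A Bᵀ 0 with hR
  have hmul_inl : ∀ i, R.mulVec Y (Sum.inl i) = ∑ k, A i k * Y (Sum.inr k) := by
    intro i
    simp [hR, Matrix.mulVec, dotProduct, Fintype.sum_sum_type]
  have hmul_inr : ∀ j, R.mulVec Y (Sum.inr j) = ∑ k, B k j * Y (Sum.inl k) := by
    intro j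
    simp [hR, Matrix.mulVec, dotProduct, Fintype.sum_sum_type,
      Matrix.transpose_apply]
  have hpure : ∀ j : Fin n ⊕ Fin n, IsProbVec (fun k => if k = j then (1:ℝ) else 0) := by
    intro j
    constructor
    · intro k; positivity
    · simp
  have hdot : ∀ (j : Fin n ⊕ Fin n) (v : Fin n ⊕ Fin n → ℝ),
      dotProduct (fun k => if k = j then (1:ℝ) else 0) v = v j := by
    intro j v
    simp [dotProduct, ite_mul]
  have j0 : Fin n := ⟨0, hn⟩
  -- Claim A
  have claimA : ¬(p = 1 ∧ q = 1) := by
    rintro ⟨hpe, hqe⟩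
    have hYr : ∀ k, Y (Sum.inr k) = 0 := by
      have hs : ∑ i : Fin n, Y (Sum.inr i) = 0 := by linarith
      intro k
      exact (Finset.sum_eq_zero_iff_of_nonneg (fun i _ => hY0 _)).mp hs k (Finset.mem_univ k)
    have hXr : ∀ k, X (Sum.inr k) = 0 := by
      have hs : ∑ i : Fin n, X (Sum.inr i) = 0 := by linarith
      intro k
      exact (Finset.sum_eq_zero_iff_of_nonneg (fun i _ => hX0 _)).mp hs k (Finset.mem_univ k)
    have hv : dotProduct X (R.mulVec Y) = 0 := by
      rw [dotProduct, Fintype.sum_sum_type]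
      rw [Finset.sum_eq_zero, Finset.sum_eq_zero, add_zero]
      · intro i _; simp [hXr]
      · intro i _; rw [hmul_inl]; simp [hYr]
    obtain ⟨k0, hk0⟩ : ∃ k, 0 < Y (Sum.inl k) := by
      by_contra h
      push_neg at h
      have : ∑ k : Fin n, Y (Sum.inl k) ≤ 0 := Finset.sum_nonpos fun k _ => h k
      rw [← hq] at this
      linarith
    have hdev := hmaxX (fun k => if k = Sum.inr j0 then 1 else 0) (hpure _)
    rw [hdot, hmul_inr, hv] at hdev
    have hpos : B k0 j0 * Y (Sum.inl k0) ≤ ∑ k, B k j0 * Y (Sum.inl k) :=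
      Finset.single_le_sum (fun k _ => mul_nonneg (hB k j0).le (hY0 _))
        (Finset.mem_univ k0)
    nlinarith [hB k0 j0]
  -- Claim B
  have claimB : ¬(p = 0 ∧ q = 0) := by
    rintro ⟨hpe, hqe⟩
    have hYl : ∀ k, Y (Sum.inl k) = 0 := by
      have hs : ∑ i : Fin n, Y (Sum.inl i) = 0 := by rw [← hq]; exact hqe
      intro k
      exact (Finset.sum_eq_zero_iff_of_nonneg (fun i _ => hY0 _)).mp hs k (Finset.mem_univ k)
    have hXl : ∀ k, X (Sum.inl k) = 0 := by
      have hs : ∑ i : Fin n, X (Sum.inl i) = 0 := by rw [← hp]; exact hpe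
      intro k
      exact (Finset.sum_eq_zero_iff_of_nonneg (fun i _ => hX0 _)).mp hs k (Finset.mem_univ k)
    have hv : dotProduct X (R.mulVec Y) = 0 := by
      rw [dotProduct, Fintype.sum_sum_type]
      rw [Finset.sum_eq_zero, Finset.sum_eq_zero, add_zero]
      · intro i _; rw [hmul_inr]; simp [hYl]
      · intro i _; simp [hXl]
    obtain ⟨k0, hk0⟩ : ∃ k, 0 < Y (Sum.inr k) := by
      by_contra h
      push_neg at h
      have : ∑ k : Fin n, Y (Sum.inr k) ≤ 0 := Finset.sum_nonpos fun k _ => h k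
      linarith
    have hdev := hmaxX (fun k => if k = Sum.inl j0 then 1 else 0) (hpure _)
    rw [hdot, hmul_inl, hv] at hdev
    have hpos : A j0 k0 * Y (Sum.inr k0) ≤ ∑ k, A j0 k * Y (Sum.inr k) :=
      Finset.single_le_sum (fun k _ => mul_nonneg (hA j0 k).le (hY0 _))
        (Finset.mem_univ k0)
    nlinarith [hA j0 k0]
  refine ⟨claimA, claimB, ?_⟩
  by_contra h
  push_neg at h
  obtain ⟨h1, h2⟩ := h
  rcases le_or_gt p 0 with hp' | hp'
  · rcases le_or_gt q 0 with hq' | hq'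
    · exact claimB ⟨le_antisymm hp' hp0, le_antisymm hq' hq0⟩
    · have := h2 (by linarith) -- p < 1 → need; p ≤ 0 < 1
      linarith
  · have hq' := h1 hp'
    rcases lt_or_ge p 1 with hpl | hpl
    · have := h2 hpl
      linarith
    · exact claimA ⟨le_antisymm hp1 hpl, le_antisymm hq1 hq'⟩
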